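/- Let p be a prime and f = a_0 + a_1 x + ... + a_n x^n ∈ ℤ[x] with a_0 ≠ 0, and suppose there exists an index j with 1 ≤ j ≤ n such that (i) p ∤ a_j, (ii) v_p(a_0)/j < v_p(a_i)/(j-i) for each i = 1, ..., j-1 with a_i ≠ 0, and (iii) gcd(v_p(a_0), j) = 1. Then for any factorization f = f₁ f₂ in ℤ[x], either v_p(f₁(0)) = v_p(a_0) or v_p(f₂(0)) = v_p(a_0). -/

import Mathlib

open Polynomial

private lemma eV_eq_padic {p : ℕ} (hp : p.Prime) {z : ℤ} (hz : z ≠ 0) :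
    emultiplicity (p : ℤ) z = (padicValInt p z : ℕ∞) := by
  have hfin : FiniteMultiplicity (p : ℤ) z :=
    Int.finiteMultiplicity_iff.2 ⟨by simpa using hp.ne_one, hz⟩
  rw [hfin.emultiplicity_eq_multiplicity, padicValInt.of_ne_one_ne_zero hp.ne_one hz]

private lemma exists_maxmin (F : ℕ → ℕ∞) (d : ℕ) (htop : ∀ i, d < i → F i = ⊤)
    (hne : F 0 ≠ ⊤) :
    ∃ a₀, (∀ a, F a₀ ≤ F a) ∧ (∀ a, a₀ < a → F a₀ < F a) := by
  obtain ⟨i₀, hi₀mem, hi₀⟩ := Finset.exists_min_image (Finset.range (d+1)) F ⟨0, by simp⟩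
  set T := (Finset.range (d+1)).filter (fun a => F a = F i₀) with hT
  have hTne : T.Nonempty := ⟨i₀, by simp only [hT, Finset.mem_filter]; exact ⟨hi₀mem, trivial⟩⟩
  have hval : F (T.max' hTne) = F i₀ := (Finset.mem_filter.1 (T.max'_mem hTne)).2
  have hminall : ∀ a, F (T.max' hTne) ≤ F a := by
    intro a
    by_cases ha : a ≤ d
    · rw [hval]; exact hi₀ a (Finset.mem_range.2 (by omega))
    · rw [htop a (by omega)]; exact le_top
  refine ⟨T.max' hTne, hminall, ?_⟩
  intro a hagt
  have hlt_top : F (T.max' hTne) < ⊤ :=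
    lt_of_le_of_lt (hminall 0) (lt_top_iff_ne_top.2 hne)
  by_cases ha : a ≤ d
  · have hnotT : a ∉ T := fun hmem => absurd (T.le_max' a hmem) (by omega)
    rw [hT, Finset.mem_filter] at hnotT
    have hne' : F a ≠ F i₀ := fun h => hnotT ⟨Finset.mem_range.2 (by omega), h⟩
    rw [hval]
    exact lt_of_le_of_ne (hi₀ a (Finset.mem_range.2 (by omega))) (Ne.symm hne')
  · rw [htop a (by omega)]; exact hlt_top

private lemma eV_sum_eq {p : ℕ} (hp : p.Prime) {ι : Type*} [DecidableEq ι] (s : Finset ι) (t : ι → ℤ)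
    (i₀ : ι) (hmem : i₀ ∈ s) (c : ℕ) (h₀ : emultiplicity (p : ℤ) (t i₀) = (c : ℕ∞))
    (hs : ∀ i ∈ s, i ≠ i₀ → (c : ℕ∞) < emultiplicity (p : ℤ) (t i)) :
    emultiplicity (p : ℤ) (∑ i ∈ s, t i) = (c : ℕ∞) := by
  have hdvd1 : ∀ i ∈ s.erase i₀, (p : ℤ) ^ (c + 1) ∣ t i := by
    intro i hi
    apply pow_dvd_of_le_emultiplicity
    have h := hs i (Finset.mem_of_mem_erase hi) (Finset.ne_of_mem_erase hi)
    have := (ENat.add_one_le_iff (by simp : (c : ℕ∞) ≠ ⊤)).2 h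
    exact_mod_cast this
  have hc_dvd : (p : ℤ) ^ c ∣ ∑ i ∈ s, t i := by
    apply Finset.dvd_sum
    intro i hi
    by_cases h : i = i₀
    · subst h
      exact pow_dvd_of_le_emultiplicity h₀.ge
    · exact dvd_trans (pow_dvd_pow _ (Nat.le_succ c)) (hdvd1 i (Finset.mem_erase.2 ⟨h, hi⟩))
  have hnot : ¬ (p : ℤ) ^ (c + 1) ∣ ∑ i ∈ s, t i := by
    intro hdvd
    have hsum : ∑ i ∈ s, t i = t i₀ + ∑ i ∈ s.erase i₀, t i := (Finset.add_sum_erase s t hmem).symm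
    have hdvd2 : (p : ℤ) ^ (c + 1) ∣ t i₀ := by
      have h2 : (p : ℤ) ^ (c + 1) ∣ ∑ i ∈ s.erase i₀, t i := Finset.dvd_sum hdvd1
      have h3 := dvd_sub hdvd h2
      rw [hsum, add_sub_cancel_right] at h3
      exact h3
    have h4 := le_emultiplicity_of_pow_dvd hdvd2
    rw [h₀] at h4
    have h5 : (c : ℕ∞) + 1 ≤ (c : ℕ∞) := by exact_mod_cast h4
    have h6 := (ENat.add_one_le_iff (by simp : (c : ℕ∞) ≠ ⊤)).1 h5
    exact lt_irrefl _ h6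
  refine le_antisymm ?_ (le_emultiplicity_of_pow_dvd hc_dvd)
  have h5 := emultiplicity_lt_iff_not_dvd.2 hnot
  have h6 : emultiplicity (p : ℤ) (∑ i ∈ s, t i) < (c : ℕ∞) + 1 := by
    exact_mod_cast h5
  exact (ENat.lt_add_one_iff (by simp)).1 h6

/-- Lemma 3 of the paper specialized to ℤ: the p-adic valuation of the constant
term of one of the factors equals that of the constant term of f. -/
theorem valuation_constant_term_of_factor (p : ℕ) (hp : p.Prime) (f : Polynomial ℤ) (n : ℕ)
    (hn : f.natDegree = n) (ha0 : f.coeff 0 ≠ 0) (j : ℕ)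
    (hj1 : 1 ≤ j) (hjn : j ≤ n)
    (h1 : ¬ (p : ℤ) ∣ f.coeff j)
    (h2 : ∀ i, 1 ≤ i → i < j → f.coeff i ≠ 0 →
      padicValInt p (f.coeff 0) * (j - i) < padicValInt p (f.coeff i) * j)
    (h3 : Nat.gcd (padicValInt p (f.coeff 0)) j = 1) :
    ∀ f₁ f₂ : Polynomial ℤ, f = f₁ * f₂ →
      padicValInt p (f₁.eval 0) = padicValInt p (f.coeff 0) ∨
      padicValInt p (f₂.eval 0) = padicValInt p (f.coeff 0) := by
  intro f₁ f₂ hf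
  have hp' : Prime (p : ℤ) := Nat.prime_iff_prime_int.1 hp
  have hjne : (j : ℕ∞) ≠ 0 := by exact_mod_cast Nat.one_le_iff_ne_zero.1 hj1
  rw [← coeff_zero_eq_eval_zero, ← coeff_zero_eq_eval_zero]
  set m := padicValInt p (f.coeff 0) with hm
  have ha0' : f.coeff 0 = f₁.coeff 0 * f₂.coeff 0 := by rw [hf, mul_coeff_zero]
  have hb0 : f₁.coeff 0 ≠ 0 := fun h => ha0 (by rw [ha0', h, zero_mul])
  have hc0 : f₂.coeff 0 ≠ 0 := fun h => ha0 (by rw [ha0', h, mul_zero])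
  set β := padicValInt p (f₁.coeff 0) with hβ
  set γ := padicValInt p (f₂.coeff 0) with hγ
  have hβγ : β + γ = m := by
    have hmul := emultiplicity_mul (a := f₁.coeff 0) (b := f₂.coeff 0) hp'
    rw [← ha0', eV_eq_padic hp ha0, eV_eq_padic hp hb0, eV_eq_padic hp hc0] at hmul
    exact_mod_cast hmul.symm
  by_cases hm0 : m = 0
  · left; omega
  have hm1 : 1 ≤ m := Nat.one_le_iff_ne_zero.2 hm0
  set v : ℤ → ℕ∞ := fun z => emultiplicity (p : ℤ) z with hv
  -- the weight functions
  set W₁ : ℕ → ℕ∞ := fun a => (j : ℕ∞) * v (f₁.coeff a) + ((m * a : ℕ) : ℕ∞) with hW1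
  set W₂ : ℕ → ℕ∞ := fun a => (j : ℕ∞) * v (f₂.coeff a) + ((m * a : ℕ) : ℕ∞) with hW2
  -- P1 : lower bound for the weights of f
  have P1 : ∀ i : ℕ, ((j * m : ℕ) : ℕ∞) ≤ (j : ℕ∞) * v (f.coeff i) + ((m * i : ℕ) : ℕ∞) := by
    intro i
    by_cases h0 : f.coeff i = 0
    · rw [hv]; simp only [h0, emultiplicity_zero]
      rw [ENat.mul_top hjne, top_add]; exact le_top
    · rw [hv]; simp only []
      rw [eV_eq_padic hp h0]
      have : (j : ℕ∞) * (padicValInt p (f.coeff i) : ℕ∞) + ((m * i : ℕ) : ℕ∞)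
          = ((j * padicValInt p (f.coeff i) + m * i : ℕ) : ℕ∞) := by push_cast; ring
      rw [this, Nat.cast_le]
      rcases Nat.eq_zero_or_pos i with hi0 | hi1
      · subst hi0; simp [← hm, Nat.mul_comm]
      · by_cases hij : i < j
        · have hh := h2 i hi1 hij h0
          have hsplit : m * (j - i) + m * i = m * j := by
            rw [← Nat.mul_add, Nat.sub_add_cancel (le_of_lt hij)]
          have hcm : padicValInt p (f.coeff i) * j = j * padicValInt p (f.coeff i) :=
            Nat.mul_comm _ _
          have hjm : j * m = m * j := Nat.mul_comm _ _
          omega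
        · have hji : j ≤ i := le_of_not_gt hij
          have : m * j ≤ m * i := Nat.mul_le_mul_left m hji
          have hjm : j * m = m * j := Nat.mul_comm _ _
          omega
  -- max-min indices for f₁ and f₂
  have htop1 : ∀ a, f₁.natDegree < a → W₁ a = ⊤ := by
    intro a ha
    rw [hW1]; simp only [coeff_eq_zero_of_natDegree_lt ha, hv, emultiplicity_zero]
    rw [ENat.mul_top hjne, top_add]
  have htop2 : ∀ a, f₂.natDegree < a → W₂ a = ⊤ := by
    intro a ha
    rw [hW2]; simp only [coeff_eq_zero_of_natDegree_lt ha, hv, emultiplicity_zero]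
    rw [ENat.mul_top hjne, top_add]
  have hW10 : W₁ 0 = ((j * β : ℕ) : ℕ∞) := by
    rw [hW1]; simp only [hv]
    rw [eV_eq_padic hp hb0, ← hβ]; push_cast; ring
  have hW20 : W₂ 0 = ((j * γ : ℕ) : ℕ∞) := by
    rw [hW2]; simp only [hv]
    rw [eV_eq_padic hp hc0, ← hγ]; push_cast; ring
  obtain ⟨a₀, hmin1, hstrict1⟩ := exists_maxmin W₁ f₁.natDegree htop1 (by rw [hW10]; exact WithTop.coe_ne_top)
  obtain ⟨b₀, hmin2, hstrict2⟩ := exists_maxmin W₂ f₂.natDegree htop2 (by rw [hW20]; exact WithTop.coe_ne_top)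
  -- finiteness of the valuations at a₀, b₀
  have hfin1 : v (f₁.coeff a₀) ≠ ⊤ := by
    intro h
    have : W₁ a₀ = ⊤ := by rw [hW1]; simp only [h]; rw [ENat.mul_top hjne, top_add]
    have h2' := hmin1 0
    rw [this, hW10, top_le_iff] at h2'
    exact WithTop.coe_ne_top h2'
  have hfin2 : v (f₂.coeff b₀) ≠ ⊤ := by
    intro h
    have : W₂ b₀ = ⊤ := by rw [hW2]; simp only [h]; rw [ENat.mul_top hjne, top_add]
    have h2' := hmin2 0
    rw [this, hW20, top_le_iff] at h2'
    exact WithTop.coe_ne_top h2'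
  set u₁ := (v (f₁.coeff a₀)).toNat with hu₁def
  have hu₁ : (u₁ : ℕ∞) = v (f₁.coeff a₀) := ENat.coe_toNat hfin1
  set u₂ := (v (f₂.coeff b₀)).toNat with hu₂def
  have hu₂ : (u₂ : ℕ∞) = v (f₂.coeff b₀) := ENat.coe_toNat hfin2
  -- the key valuation computation at index a₀ + b₀
  have hkey : v (f.coeff (a₀ + b₀)) = ((u₁ + u₂ : ℕ) : ℕ∞) := by
    rw [hf, coeff_mul, hv]
    apply eV_sum_eq hp _ _ ((a₀, b₀)) (Finset.HasAntidiagonal.mem_antidiagonal.2 rfl)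
    · rw [emultiplicity_mul hp']
      show v (f₁.coeff a₀) + v (f₂.coeff b₀) = _
      rw [← hu₁, ← hu₂]; push_cast; ring
    · rintro ⟨a, b⟩ hab hne
      have habs : a + b = a₀ + b₀ := Finset.HasAntidiagonal.mem_antidiagonal.1 hab
      have hcase : a₀ < a ∨ b₀ < b := by
        rcases Nat.lt_or_ge a₀ a with h | h
        · exact Or.inl h
        · right
          have : a ≠ a₀ ∨ b ≠ b₀ := by
            by_contra hcon; push_neg at hcon
            exact hne (Prod.ext hcon.1 hcon.2)
          omega
      rw [emultiplicity_mul hp']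
      show ((u₁ + u₂ : ℕ) : ℕ∞) < v (f₁.coeff a) + v (f₂.coeff b)
      by_contra hle
      push_neg at hle
      -- both valuations must be finite
      have hXfin : v (f₁.coeff a) ≠ ⊤ := by
        intro h; rw [h, top_add] at hle; exact ENat.coe_ne_top _ (top_le_iff.1 hle)
      have hYfin : v (f₂.coeff b) ≠ ⊤ := by
        intro h; rw [h, add_top] at hle; exact ENat.coe_ne_top _ (top_le_iff.1 hle)
      set x := (v (f₁.coeff a)).toNat with hxdef
      have hx : (x : ℕ∞) = v (f₁.coeff a) := ENat.coe_toNat hXfin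
      set y := (v (f₂.coeff b)).toNat with hydef
      have hy : (y : ℕ∞) = v (f₂.coeff b) := ENat.coe_toNat hYfin
      have hxy : x + y ≤ u₁ + u₂ := by
        rw [← hx, ← hy] at hle; exact_mod_cast hle
      -- weight inequalities, cast down to ℕ
      have hWa : W₁ a₀ ≤ W₁ a := hmin1 a
      have hWb : W₂ b₀ ≤ W₂ b := hmin2 b
      have hWa' : (j * u₁ + m * a₀ : ℕ) ≤ (j * x + m * a : ℕ) := by
        have : ((j * u₁ + m * a₀ : ℕ) : ℕ∞) ≤ ((j * x + m * a : ℕ) : ℕ∞) := by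
          calc ((j * u₁ + m * a₀ : ℕ) : ℕ∞) = W₁ a₀ := by
                rw [hW1]; simp only [← hu₁]; push_cast; ring
            _ ≤ W₁ a := hmin1 a
            _ = ((j * x + m * a : ℕ) : ℕ∞) := by
                rw [hW1]; simp only [← hx]; push_cast; ring
        exact_mod_cast this
      have hWb' : (j * u₂ + m * b₀ : ℕ) ≤ (j * y + m * b : ℕ) := by
        have : ((j * u₂ + m * b₀ : ℕ) : ℕ∞) ≤ ((j * y + m * b : ℕ) : ℕ∞) := by
          calc ((j * u₂ + m * b₀ : ℕ) : ℕ∞) = W₂ b₀ := by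
                rw [hW2]; simp only [← hu₂]; push_cast; ring
            _ ≤ W₂ b := hmin2 b
            _ = ((j * y + m * b : ℕ) : ℕ∞) := by
                rw [hW2]; simp only [← hy]; push_cast; ring
        exact_mod_cast this
      -- one of the inequalities is strict
      have hstrict : (j * u₁ + m * a₀ : ℕ) + (j * u₂ + m * b₀ : ℕ)
          < (j * x + m * a : ℕ) + (j * y + m * b : ℕ) := by
        rcases hcase with hca | hcb
        · have h := hstrict1 a hca
          have h' : (j * u₁ + m * a₀ : ℕ) < (j * x + m * a : ℕ) := by
            have : ((j * u₁ + m * a₀ : ℕ) : ℕ∞) < ((j * x + m * a : ℕ) : ℕ∞) := by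
              calc ((j * u₁ + m * a₀ : ℕ) : ℕ∞) = W₁ a₀ := by
                    rw [hW1]; simp only [← hu₁]; push_cast; ring
                _ < W₁ a := h
                _ = ((j * x + m * a : ℕ) : ℕ∞) := by
                    rw [hW1]; simp only [← hx]; push_cast; ring
            exact_mod_cast this
          omega
        · have h := hstrict2 b hcb
          have h' : (j * u₂ + m * b₀ : ℕ) < (j * y + m * b : ℕ) := by
            have : ((j * u₂ + m * b₀ : ℕ) : ℕ∞) < ((j * y + m * b : ℕ) : ℕ∞) := by
              calc ((j * u₂ + m * b₀ : ℕ) : ℕ∞) = W₂ b₀ := by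
                    rw [hW2]; simp only [← hu₂]; push_cast; ring
                _ < W₂ b := h
                _ = ((j * y + m * b : ℕ) : ℕ∞) := by
                    rw [hW2]; simp only [← hy]; push_cast; ring
            exact_mod_cast this
          omega
      have hma : m * a + m * b = m * a₀ + m * b₀ := by
        rw [← Nat.mul_add, ← Nat.mul_add, habs]
      have hjxy : j * u₁ + j * u₂ < j * x + j * y := by omega
      have : j * (u₁ + u₂) < j * (x + y) := by
        rw [Nat.mul_add, Nat.mul_add]; omega
      have := Nat.lt_of_mul_lt_mul_left this
      omega
  -- E-equations via the squeeze
  have hsq : j * m ≤ j * (u₁ + u₂) + m * (a₀ + b₀) := by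
    have := P1 (a₀ + b₀)
    rw [hkey] at this
    have h' : ((j * m : ℕ) : ℕ∞) ≤ ((j * (u₁ + u₂) + m * (a₀ + b₀) : ℕ) : ℕ∞) := by
      calc ((j * m : ℕ) : ℕ∞) ≤ _ := this
        _ = ((j * (u₁ + u₂) + m * (a₀ + b₀) : ℕ) : ℕ∞) := by push_cast; ring
    exact_mod_cast h'
  have hE1' : j * u₁ + m * a₀ ≤ j * β := by
    have : ((j * u₁ + m * a₀ : ℕ) : ℕ∞) ≤ ((j * β : ℕ) : ℕ∞) := by
      calc ((j * u₁ + m * a₀ : ℕ) : ℕ∞) = W₁ a₀ := by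
            rw [hW1]; simp only [← hu₁]; push_cast; ring
        _ ≤ W₁ 0 := hmin1 0
        _ = ((j * β : ℕ) : ℕ∞) := hW10
    exact_mod_cast this
  have hE2' : j * u₂ + m * b₀ ≤ j * γ := by
    have : ((j * u₂ + m * b₀ : ℕ) : ℕ∞) ≤ ((j * γ : ℕ) : ℕ∞) := by
      calc ((j * u₂ + m * b₀ : ℕ) : ℕ∞) = W₂ b₀ := by
            rw [hW2]; simp only [← hu₂]; push_cast; ring
        _ ≤ W₂ 0 := hmin2 0
        _ = ((j * γ : ℕ) : ℕ∞) := hW20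
    exact_mod_cast this
  have hβγj : j * β + j * γ = j * m := by rw [← Nat.mul_add, hβγ]
  have hexp1 : j * (u₁ + u₂) = j * u₁ + j * u₂ := by rw [Nat.mul_add]
  have hexp2 : m * (a₀ + b₀) = m * a₀ + m * b₀ := by rw [Nat.mul_add]
  have hE1 : j * u₁ + m * a₀ = j * β := by omega
  have hE2 : j * u₂ + m * b₀ = j * γ := by omega
  -- divisibility
  have hcop : Nat.Coprime j m := (Nat.coprime_comm.1 h3)
  have hdvda : j ∣ a₀ := by
    have hd : j ∣ m * a₀ := by
      have : m * a₀ = j * β - j * u₁ := by omega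
      rw [this]
      exact Nat.dvd_sub (Dvd.intro β rfl) (Dvd.intro u₁ rfl)
    exact hcop.dvd_of_dvd_mul_left hd
  have hdvdb : j ∣ b₀ := by
    have hd : j ∣ m * b₀ := by
      have : m * b₀ = j * γ - j * u₂ := by omega
      rw [this]
      exact Nat.dvd_sub (Dvd.intro γ rfl) (Dvd.intro u₂ rfl)
    exact hcop.dvd_of_dvd_mul_left hd
  -- a₀ + b₀ ≤ j
  have hub : a₀ + b₀ ≤ j := by
    have h' : m * (a₀ + b₀) ≤ m * j := by
      have : j * m = m * j := Nat.mul_comm _ _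
      omega
    exact Nat.le_of_mul_le_mul_left h' hm1
  -- a₀ + b₀ ≥ j
  have hlb : j ≤ a₀ + b₀ := by
    by_contra hlt
    push_neg at hlt
    apply h1
    rw [hf, coeff_mul]
    apply Finset.dvd_sum
    rintro ⟨a, b⟩ hab
    have habs : a + b = j := Finset.HasAntidiagonal.mem_antidiagonal.1 hab
    have hcase : a₀ < a ∨ b₀ < b := by omega
    by_contra hnd
    have hnd1 : ¬ (p : ℤ) ∣ f₁.coeff a := fun h => hnd (Dvd.dvd.mul_right h _)
    have hnd2 : ¬ (p : ℤ) ∣ f₂.coeff b := fun h => hnd (Dvd.dvd.mul_left h _)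
    have hva : v (f₁.coeff a) = 0 := emultiplicity_eq_zero.2 hnd1
    have hvb : v (f₂.coeff b) = 0 := emultiplicity_eq_zero.2 hnd2
    have hWa : (j * u₁ + m * a₀ : ℕ) ≤ (m * a : ℕ) ∧
        ((a₀ < a) → (j * u₁ + m * a₀ : ℕ) < (m * a : ℕ)) := by
      constructor
      · have : ((j * u₁ + m * a₀ : ℕ) : ℕ∞) ≤ ((m * a : ℕ) : ℕ∞) := by
          calc ((j * u₁ + m * a₀ : ℕ) : ℕ∞) = W₁ a₀ := by
                rw [hW1]; simp only [← hu₁]; push_cast; ring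
            _ ≤ W₁ a := hmin1 a
            _ = ((m * a : ℕ) : ℕ∞) := by rw [hW1]; simp only [hva]; simp
        exact_mod_cast this
      · intro hca
        have : ((j * u₁ + m * a₀ : ℕ) : ℕ∞) < ((m * a : ℕ) : ℕ∞) := by
          calc ((j * u₁ + m * a₀ : ℕ) : ℕ∞) = W₁ a₀ := by
                rw [hW1]; simp only [← hu₁]; push_cast; ring
            _ < W₁ a := hstrict1 a hca
            _ = ((m * a : ℕ) : ℕ∞) := by rw [hW1]; simp only [hva]; simp
        exact_mod_cast this
    have hWb : (j * u₂ + m * b₀ : ℕ) ≤ (m * b : ℕ) ∧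
        ((b₀ < b) → (j * u₂ + m * b₀ : ℕ) < (m * b : ℕ)) := by
      constructor
      · have : ((j * u₂ + m * b₀ : ℕ) : ℕ∞) ≤ ((m * b : ℕ) : ℕ∞) := by
          calc ((j * u₂ + m * b₀ : ℕ) : ℕ∞) = W₂ b₀ := by
                rw [hW2]; simp only [← hu₂]; push_cast; ring
            _ ≤ W₂ b := hmin2 b
            _ = ((m * b : ℕ) : ℕ∞) := by rw [hW2]; simp only [hvb]; simp
        exact_mod_cast this
      · intro hcb
        have : ((j * u₂ + m * b₀ : ℕ) : ℕ∞) < ((m * b : ℕ) : ℕ∞) := by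
          calc ((j * u₂ + m * b₀ : ℕ) : ℕ∞) = W₂ b₀ := by
                rw [hW2]; simp only [← hu₂]; push_cast; ring
            _ < W₂ b := hstrict2 b hcb
            _ = ((m * b : ℕ) : ℕ∞) := by rw [hW2]; simp only [hvb]; simp
        exact_mod_cast this
    have hmab : m * a + m * b = m * j := by rw [← Nat.mul_add, habs]
    have hjm : j * m = m * j := Nat.mul_comm _ _
    rcases hcase with hca | hcb
    · have := hWa.2 hca
      have := hWb.1
      omega
    · have := hWa.1
      have := hWb.2 hcb
      omega
  have hab : a₀ + b₀ = j := le_antisymm hub hlb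
  -- conclude
  by_cases ha₀ : a₀ = 0
  · -- then b₀ = j and γ = m
    right
    have hb₀ : b₀ = j := by omega
    have : j * u₂ + m * j = j * γ := by rw [hb₀] at hE2; exact hE2
    have hγm : j * (u₂ + m) = j * γ := by
      rw [Nat.mul_add]
      have : m * j = j * m := Nat.mul_comm _ _
      omega
    have := Nat.eq_of_mul_eq_mul_left (by omega : 0 < j) hγm
    omega
  · -- then a₀ = j and β = m
    left
    have ha₀j : a₀ = j := by
      have := Nat.le_of_dvd (by omega) hdvda
      omega
    have : j * u₁ + m * j = j * β := by rw [ha₀j] at hE1; exact hE1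
    have hβm : j * (u₁ + m) = j * β := by
      rw [Nat.mul_add]
      have : m * j = j * m := Nat.mul_comm _ _
      omega
    have := Nat.eq_of_mul_eq_mul_left (by omega : 0 < j) hβm
    omega
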